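/- Let (P^n)_{n≥1} be a time consistent family of coherent exchangeable lower previsions on ℒ(𝒳^n), with count distributions Q^n on ℒ(𝒩^n) defined by Q^n(h) := P^n(h∘T^n). Then there is a unique coherent lower prevision S on the linear space 𝒱(Σ_𝒳) of polynomial gambles on the 𝒳-simplex such that for all n ≥ 1, every gamble f on 𝒳^n and every gamble g on 𝒩^n: P^n(f) = S(Mn^n(f|·)) and Q^n(g) = S(CoMn^n(g|·)). -/

import Mathlib

open Finset Filter Topology

/-- A coherent lower prevision on the gambles over a finite nonempty space `Ω`. -/
def LowerPrevCoherent {Ω : Type*} [Fintype Ω] [Nonempty Ω] (P : (Ω → ℝ) → ℝ) : Prop :=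
  (∀ f : Ω → ℝ, sInf (Set.range f) ≤ P f) ∧
  (∀ (f : Ω → ℝ) (l : ℝ), 0 ≤ l → P (fun ω => l * f ω) = l * P f) ∧
  (∀ f g : Ω → ℝ, P f + P g ≤ P (f + g))

/-- A linear prevision on the gambles over a finite nonempty space `Ω`. -/
def LinearPrevision {Ω : Type*} [Fintype Ω] [Nonempty Ω] (P : (Ω → ℝ) → ℝ) : Prop :=
  (∀ f g : Ω → ℝ, P (f + g) = P f + P g) ∧
  (∀ (l : ℝ) (f : Ω → ℝ), P (fun ω => l * f ω) = l * P f) ∧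
  (∀ f : Ω → ℝ, (∀ ω, 0 ≤ f ω) → 0 ≤ P f) ∧
  P (fun _ => 1) = 1

/-- Exchangeability of a lower prevision on gambles on `X^N`:
`P (πf − f) ≥ 0` for every gamble `f` and every permutation `π`. -/
def Exchangeable {X : Type*} {N : ℕ} (P : ((Fin N → X) → ℝ) → ℝ) : Prop :=
  ∀ (f : (Fin N → X) → ℝ) (π : Equiv.Perm (Fin N)),
    0 ≤ P (fun x => f (fun k => x (π k)) - f x)

/-- The set of count vectors `𝒩^n`. -/
abbrev CVec (X : Type*) [Fintype X] (n : ℕ) : Type _ := {m : X → ℕ // ∑ x, m x = n}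

noncomputable instance {X : Type*} [Fintype X] [DecidableEq X] (n : ℕ) : Fintype (CVec X n) := by
  have key : ∀ (m : CVec X n) (x : X), m.1 x < n + 1 := by
    intro m x
    have h1 : m.1 x ≤ ∑ y, m.1 y :=
      Finset.single_le_sum (fun i _ => Nat.zero_le _) (Finset.mem_univ x)
    have h2 := m.2
    omega
  exact Fintype.ofInjective (fun m : CVec X n => fun x => (⟨m.1 x, key m x⟩ : Fin (n+1)))
    (fun a b hab => Subtype.ext (funext fun x => congrArg Fin.val (congrFun hab x)))

instance {X : Type*} [Fintype X] [DecidableEq X] [Nonempty X] (n : ℕ) :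
    Nonempty (CVec X n) :=
  ⟨⟨fun x => if x = Classical.arbitrary X then n else 0, by simp⟩⟩

/-- The counting map `T^n : X^n → 𝒩^n`. -/
def countMap {X : Type*} [Fintype X] [DecidableEq X] (n : ℕ) (z : Fin n → X) : CVec X n :=
  ⟨fun x => (Finset.univ.filter fun k => z k = x).card, by
    have h := Finset.card_eq_sum_card_fiberwise (f := z) (s := Finset.univ) (t := Finset.univ)
      (fun k _ => Finset.mem_univ (z k))
    simpa using h.symm⟩

/-- `ν(m) = n!/∏ₓ mₓ!` for a count vector `m ∈ 𝒩^n`. -/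
def nu {X : Type*} [Fintype X] {n : ℕ} (m : CVec X n) : ℕ :=
  Nat.multinomial Finset.univ m.1

/-- `ν(μ − m)`, which is `0` unless `m ≤ μ` componentwise. -/
def nuSub {X : Type*} [Fintype X] {n k : ℕ} (μ : CVec X (n + k)) (m : CVec X n) : ℕ :=
  if ∀ x, m.1 x ≤ μ.1 x then Nat.multinomial Finset.univ (fun x => μ.1 x - m.1 x) else 0

/-- The multiple hyper-geometric prevision `MuHy^n(f|m) = (1/ν(m)) ∑_{z∈[m]} f(z)`. -/
noncomputable def MuHy {X : Type*} [Fintype X] [DecidableEq X] {n : ℕ}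
    (f : (Fin n → X) → ℝ) (m : CVec X n) : ℝ :=
  (∑ z ∈ Finset.univ.filter fun z : Fin n → X => countMap n z = m, f z) / (nu m : ℝ)

/-- The `X`-simplex `Σ_X`, as a subtype of `X → ℝ`. -/
abbrev SimplexPt (X : Type*) [Fintype X] : Type _ :=
  {θ : X → ℝ // (∀ x, 0 ≤ θ x) ∧ ∑ x, θ x = 1}

/-- The Bernstein basis polynomial `B_m(θ) = ν(m) ∏ₓ θₓ^{mₓ}`. -/
noncomputable def Bern {X : Type*} [Fintype X] {n : ℕ} (m : CVec X n) (θ : X → ℝ) : ℝ :=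
  (nu m : ℝ) * ∏ x, θ x ^ m.1 x

/-- The count multinomial expectation `CoMn^n(g|θ) = ∑_m g(m) B_m(θ)`. -/
noncomputable def CoMn {X : Type*} [Fintype X] [DecidableEq X] {n : ℕ} (g : CVec X n → ℝ) (θ : X → ℝ) : ℝ :=
  ∑ m : CVec X n, g m * Bern m θ

/-- The multinomial expectation `Mn^n(f|θ) = ∑_z f(z) ∏ₓ θₓ^{Tₓ(z)}`. -/
noncomputable def Mn {X : Type*} [Fintype X] [DecidableEq X] {n : ℕ}
    (f : (Fin n → X) → ℝ) (θ : X → ℝ) : ℝ :=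
  ∑ z : Fin n → X, f z * ∏ x, θ x ^ (countMap n z).1 x

/-- `CoMn^n(g|·)` as a function on the simplex. -/
noncomputable def CoMnP {X : Type*} [Fintype X] [DecidableEq X] {n : ℕ} (g : CVec X n → ℝ)
    (θ : SimplexPt X) : ℝ :=
  CoMn g θ.1

/-- `Mn^n(f|·)` as a function on the simplex. -/
noncomputable def MnP {X : Type*} [Fintype X] [DecidableEq X] {n : ℕ}
    (f : (Fin n → X) → ℝ) (θ : SimplexPt X) : ℝ :=
  Mn f θ.1

/-- Polynomial gambles on the simplex: the set `𝒱(Σ_X)`. -/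
def IsPolyGamble {X : Type*} [Fintype X] [DecidableEq X] (p : SimplexPt X → ℝ) : Prop :=
  ∃ n : ℕ, 1 ≤ n ∧ ∃ g : CVec X n → ℝ, p = fun θ => CoMnP g θ

/-- Coherence of a functional on the linear space `𝒱(Σ_X)` of polynomial gambles. -/
def CoherentOnPoly {X : Type*} [Fintype X] [DecidableEq X] (S : (SimplexPt X → ℝ) → ℝ) : Prop :=
  (∀ p, IsPolyGamble p → sInf (Set.range p) ≤ S p) ∧
  (∀ p, IsPolyGamble p → ∀ l : ℝ, 0 ≤ l → S (fun θ => l * p θ) = l * S p) ∧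
  (∀ p q, IsPolyGamble p → IsPolyGamble q → S p + S q ≤ S (p + q))

/-- Cylindrical extension of a gamble on `X^n` to `X^{n+k}`. -/
def cylExt {X : Type*} {n k : ℕ} (f : (Fin n → X) → ℝ) : (Fin (n + k) → X) → ℝ :=
  fun z => f fun i => z (Fin.castLE (Nat.le_add_right n k) i)

/-- Time consistency of a family of lower previsions on the `X^n`. -/
def PTimeConsistent {X : Type*} (P : ∀ n : ℕ, ((Fin n → X) → ℝ) → ℝ) : Prop :=
  ∀ n : ℕ, 1 ≤ n → ∀ (k : ℕ) (f : (Fin n → X) → ℝ), P n f = P (n + k) (cylExt f)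

/-- Time consistency of a family of count lower previsions on the `𝒩^n`. -/
def QTimeConsistent {X : Type*} [Fintype X] [DecidableEq X] (Q : ∀ n : ℕ, (CVec X n → ℝ) → ℝ) : Prop :=
  ∀ n : ℕ, 1 ≤ n → ∀ (k : ℕ) (h : CVec X n → ℝ),
    Q n h = Q (n + k) (fun μ => ∑ m : CVec X n, ((nuSub μ m : ℝ) * (nu m : ℝ) / (nu μ : ℝ)) * h m)

/-- The relative frequency vector `m/n ∈ Σ_X` of a count vector `m ∈ 𝒩^n`, `n ≥ 1`. -/
noncomputable def freqPt {X : Type*} [Fintype X] {n : ℕ} (hn : 0 < n) (m : CVec X n) :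
    SimplexPt X :=
  ⟨fun x => (m.1 x : ℝ) / n,
   fun x => div_nonneg (Nat.cast_nonneg _) (Nat.cast_nonneg _),
   by
    rw [← Finset.sum_div]
    have h : (∑ x, (m.1 x : ℝ)) = (n : ℝ) := by exact_mod_cast m.2
    rw [h]
    exact div_self (Nat.cast_ne_zero.mpr hn.ne')⟩

/-- `ḡ(μ) = ∑_m (ν(m) ν(μ−m) / ν(μ)) g(m)`. -/
noncomputable def gbar {X : Type*} [Fintype X] [DecidableEq X] {n k : ℕ}
    (g : CVec X n → ℝ) (μ : CVec X (n + k)) : ℝ :=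
  ∑ m : CVec X n, ((nu m : ℝ) * (nuSub μ m : ℝ) / (nu μ : ℝ)) * g m

section Comb
set_option linter.unusedSectionVars false
variable {X : Type*} [Fintype X] [DecidableEq X]

lemma nu_pos {n : ℕ} (m : CVec X n) : 0 < nu m := Nat.multinomial_pos _ _

lemma nu_spec {n : ℕ} (m : CVec X n) :
    (∏ x, (m.1 x).factorial) * nu m = n.factorial := by
  have := Nat.multinomial_spec Finset.univ m.1
  rwa [m.2] at this

private def sigmaFiberFin {m : X → ℕ} (x : X) :
    {s : Σ x', Fin (m x') // s.1 = x} ≃ Fin (m x) where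
  toFun s := Fin.cast (congrArg m s.2) s.1.2
  invFun i := ⟨⟨x, i⟩, rfl⟩
  left_inv := by rintro ⟨⟨x', i⟩, rfl⟩; rfl
  right_inv i := rfl

lemma exists_countMap_eq {n : ℕ} (m : CVec X n) : ∃ z : Fin n → X, countMap n z = m := by
  have hcard : Fintype.card (Σ x : X, Fin (m.1 x)) = Fintype.card (Fin n) := by
    simp [Fintype.card_sigma, m.2]
  obtain ⟨e⟩ : Nonempty ((Σ x : X, Fin (m.1 x)) ≃ Fin n) := ⟨Fintype.equivOfCardEq hcard⟩
  refine ⟨fun k => (e.symm k).1, Subtype.ext (funext fun x => ?_)⟩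
  have h1 : (countMap n (fun k => (e.symm k).1)).1 x
      = Fintype.card {k : Fin n // (e.symm k).1 = x} := by rw [Fintype.card_subtype]; rfl
  rw [h1]
  have h2 : Fintype.card {k : Fin n // (e.symm k).1 = x}
      = Fintype.card {s : Σ x', Fin (m.1 x') // s.1 = x} :=
    Fintype.card_congr (Equiv.subtypeEquiv e.symm (fun k => Iff.rfl) :
      {k : Fin n // (e.symm k).1 = x} ≃ {s : Σ x', Fin (m.1 x') // s.1 = x})
  rw [h2, Fintype.card_congr (sigmaFiberFin x), Fintype.card_fin]

lemma countMap_comp_perm {n : ℕ} (z : Fin n → X) (σ : Equiv.Perm (Fin n)) :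
    countMap n (z ∘ σ) = countMap n z := by
  refine Subtype.ext (funext fun x => ?_)
  show (Finset.univ.filter fun k => z (σ k) = x).card = (Finset.univ.filter fun k => z k = x).card
  refine Finset.card_bij (fun k _ => σ k) ?_ ?_ ?_
  · intro a ha; simp only [Finset.mem_filter, Finset.mem_univ, true_and] at ha ⊢; exact ha
  · intro a _ b _ h; exact σ.injective h
  · intro b hb
    simp only [Finset.mem_filter, Finset.mem_univ, true_and] at hb
    exact ⟨σ.symm b, by simp [hb], by simp⟩

lemma exists_perm_comp {n : ℕ} (z₁ z₂ : Fin n → X) (h : countMap n z₁ = countMap n z₂) :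
    ∃ σ : Equiv.Perm (Fin n), z₁ ∘ σ = z₂ := by
  have hc : ∀ x, Fintype.card {k // z₂ k = x} = Fintype.card {k // z₁ k = x} := by
    intro x
    rw [Fintype.card_subtype, Fintype.card_subtype]
    exact (congrArg (fun m : CVec X n => m.1 x) h).symm
  have F : ∀ x, {k // z₂ k = x} ≃ {k // z₁ k = x} := fun x => Fintype.equivOfCardEq (hc x)
  refine ⟨(Equiv.sigmaFiberEquiv z₂).symm.trans
    ((Equiv.sigmaCongrRight F).trans (Equiv.sigmaFiberEquiv z₁)), funext fun k => ?_⟩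
  show z₁ ((F (z₂ k)) ⟨k, rfl⟩).1 = z₂ k
  exact ((F (z₂ k)) ⟨k, rfl⟩).2

end Comb
section Comb2
set_option linter.unusedSectionVars false
variable {X : Type*} [Fintype X] [DecidableEq X]

/-- stabilizer subtype equiv product of fiber permutations -/
private def stabEquiv {n : ℕ} (z : Fin n → X) :
    {σ : Equiv.Perm (Fin n) // z ∘ σ = z} ≃ (∀ x : X, Equiv.Perm {k // z k = x}) where
  toFun σ x := Equiv.subtypeEquiv σ.1 (fun k => by
    constructor
    · intro hk; rw [← hk]; exact (congrFun σ.2 k)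
    · intro hk; rw [← hk]; exact (congrFun σ.2 k).symm)
  invFun F := ⟨(Equiv.sigmaFiberEquiv z).symm.trans
      ((Equiv.sigmaCongrRight F).trans (Equiv.sigmaFiberEquiv z)),
    funext fun k => ((F (z k)) ⟨k, rfl⟩).2⟩
  left_inv := by
    rintro ⟨σ, hσ⟩
    apply Subtype.ext
    apply Equiv.ext
    intro k
    rfl
  right_inv := by
    intro F
    funext x
    apply Equiv.ext
    rintro ⟨k, hk⟩
    subst hk
    rfl

lemma card_stab {n : ℕ} (z : Fin n → X) :
    (Finset.univ.filter fun σ : Equiv.Perm (Fin n) => z ∘ σ = z).card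
      = ∏ x, ((countMap n z).1 x).factorial := by
  classical
  rw [← Fintype.card_subtype]
  rw [Fintype.card_congr (stabEquiv z)]
  rw [Fintype.card_pi]
  refine Finset.prod_congr rfl fun x _ => ?_
  rw [Fintype.card_perm, Fintype.card_subtype]
  rfl

lemma card_coset {n : ℕ} (z z' : Fin n → X) (h : countMap n z' = countMap n z) :
    (Finset.univ.filter fun σ : Equiv.Perm (Fin n) => z ∘ σ = z').card
      = ∏ x, ((countMap n z).1 x).factorial := by
  classical
  obtain ⟨σ₀, hσ₀⟩ := exists_perm_comp z z' h.symm
  rw [← card_stab z]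
  refine Finset.card_bij' (fun σ _ => σ₀.symm.trans σ) (fun τ _ => σ₀.trans τ) ?_ ?_ ?_ ?_
  · intro σ hσ
    simp only [Finset.mem_filter, Finset.mem_univ, true_and] at hσ ⊢
    funext k
    have h1 : z (σ (σ₀.symm k)) = z' (σ₀.symm k) := congrFun hσ (σ₀.symm k)
    have h2 : z (σ₀ (σ₀.symm k)) = z' (σ₀.symm k) := congrFun hσ₀ (σ₀.symm k)
    show z (σ (σ₀.symm k)) = z k
    rw [h1, ← h2]
    simp
  · intro τ hτ
    simp only [Finset.mem_filter, Finset.mem_univ, true_and] at hτ ⊢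
    funext k
    have h1 : z (τ (σ₀ k)) = z (σ₀ k) := congrFun hτ (σ₀ k)
    show z (τ (σ₀ k)) = z' k
    rw [h1]
    exact congrFun hσ₀ k
  · intro σ _; apply Equiv.ext; intro k; simp
  · intro τ _; apply Equiv.ext; intro k; simp

end Comb2
section Comb3
set_option linter.unusedSectionVars false
variable {X : Type*} [Fintype X] [DecidableEq X]

lemma image_orbit {n : ℕ} (z : Fin n → X) :
    Finset.image (fun σ : Equiv.Perm (Fin n) => z ∘ σ) Finset.univ
      = Finset.univ.filter (fun z' => countMap n z' = countMap n z) := by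
  ext z'
  simp only [Finset.mem_image, Finset.mem_filter, Finset.mem_univ, true_and]
  constructor
  · rintro ⟨σ, rfl⟩; exact countMap_comp_perm z σ
  · intro h
    obtain ⟨σ, hσ⟩ := exists_perm_comp z z' h.symm
    exact ⟨σ, hσ⟩

/-- Sum over all permutations equals stabilizer-size times the sum over the fiber. -/
lemma sum_perm_eq {n : ℕ} (z : Fin n → X) (f : (Fin n → X) → ℝ) :
    ∑ σ : Equiv.Perm (Fin n), f (z ∘ σ)
      = (∏ x, ((countMap n z).1 x).factorial : ℕ) •
        ∑ z' ∈ Finset.univ.filter (fun z' : Fin n → X => countMap n z' = countMap n z), f z' := by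
  rw [Finset.sum_comp f (fun σ : Equiv.Perm (Fin n) => z ∘ σ), image_orbit z, Finset.smul_sum]
  refine Finset.sum_congr rfl fun z' hz' => ?_
  simp only [Finset.mem_filter, Finset.mem_univ, true_and] at hz'
  rw [card_coset z z' hz']

/-- The number of sequences with a given count vector is the multinomial coefficient. -/
lemma card_fiber {n : ℕ} (m : CVec X n) :
    (Finset.univ.filter fun z : Fin n → X => countMap n z = m).card = nu m := by
  obtain ⟨z₀, rfl⟩ := exists_countMap_eq m
  have key : n.factorial
      = (Finset.univ.filter fun z : Fin n → X => countMap n z = countMap n z₀).card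
        * ∏ x, ((countMap n z₀).1 x).factorial := by
    have h0 : n.factorial = (Finset.univ : Finset (Equiv.Perm (Fin n))).card := by
      rw [Finset.card_univ, Fintype.card_perm, Fintype.card_fin]
    rw [h0]
    rw [Finset.card_eq_sum_card_fiberwise (f := fun σ : Equiv.Perm (Fin n) => z₀ ∘ σ)
      (t := Finset.univ.filter fun z' => countMap n z' = countMap n z₀)
      (fun σ _ => by simp [countMap_comp_perm])]
    rw [Finset.sum_congr rfl (fun z' hz' => by
      simp only [Finset.mem_filter, Finset.mem_univ, true_and] at hz'
      exact card_coset z₀ z' hz')]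
    rw [Finset.sum_const, smul_eq_mul]
  have h2 := nu_spec (countMap n z₀)
  have hpos : 0 < ∏ x, ((countMap n z₀).1 x).factorial :=
    Finset.prod_pos fun x _ => Nat.factorial_pos _
  rw [← h2, mul_comm (∏ x, ((countMap n z₀).1 x).factorial)] at key
  exact (Nat.eq_of_mul_eq_mul_right hpos key).symm

end Comb3
section Alg
set_option linter.unusedSectionVars false
variable {X : Type*} [Fintype X] [DecidableEq X]

lemma nu_ne_zero_real {n : ℕ} (m : CVec X n) : (nu m : ℝ) ≠ 0 :=
  Nat.cast_ne_zero.mpr (nu_pos m).ne'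

lemma prod_pow_count {n : ℕ} (θ : X → ℝ) (z : Fin n → X) :
    ∏ x, θ x ^ (countMap n z).1 x = ∏ j, θ (z j) := by
  rw [← Finset.prod_fiberwise Finset.univ z (fun j => θ (z j))]
  refine Finset.prod_congr rfl fun x _ => ?_
  have h1 : ∀ j ∈ Finset.univ.filter (fun j => z j = x), θ (z j) = θ x := fun j hj => by
    simp only [Finset.mem_filter] at hj; rw [hj.2]
  rw [Finset.prod_congr rfl h1, Finset.prod_const]
  rfl

lemma Mn_eq {n : ℕ} (f : (Fin n → X) → ℝ) (θ : X → ℝ) :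
    Mn f θ = ∑ z : Fin n → X, f z * ∏ j, θ (z j) := by
  unfold Mn
  exact Finset.sum_congr rfl fun z _ => by rw [prod_pow_count]

lemma sum_group_count {n : ℕ} (F : (Fin n → X) → ℝ) :
    ∑ z : Fin n → X, F z
      = ∑ m : CVec X n, ∑ z ∈ Finset.univ.filter fun z => countMap n z = m, F z :=
  (Finset.sum_fiberwise Finset.univ (countMap n) F).symm

lemma sum_prod_theta (k : ℕ) (θ : X → ℝ) :
    ∑ z : Fin k → X, ∏ j, θ (z j) = (∑ x, θ x) ^ k := by
  have := Finset.prod_univ_sum (fun _ : Fin k => (Finset.univ : Finset X)) (fun _ x => θ x)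
  rw [Fintype.piFinset_univ] at this
  rw [← this, Finset.prod_const, Finset.card_univ, Fintype.card_fin]

/-- `CoMn (MuHy F) = Mn F` for every `θ`. -/
lemma CoMn_MuHy {n : ℕ} (F : (Fin n → X) → ℝ) (θ : X → ℝ) :
    CoMn (MuHy F) θ = Mn F θ := by
  unfold CoMn MuHy Bern Mn
  rw [sum_group_count (fun z => F z * ∏ x, θ x ^ (countMap n z).1 x)]
  refine Finset.sum_congr rfl fun m _ => ?_
  rw [div_mul_eq_mul_div, mul_comm ((nu m : ℝ)), ← mul_assoc, mul_div_assoc,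
    div_self (nu_ne_zero_real m), mul_one, Finset.sum_mul]
  refine Finset.sum_congr rfl fun z hz => ?_
  simp only [Finset.mem_filter] at hz
  rw [hz.2]

/-- `Mn (g ∘ countMap) = CoMn g` for every `θ`. -/
lemma Mn_comp_count {n : ℕ} (g : CVec X n → ℝ) (θ : X → ℝ) :
    Mn (fun z => g (countMap n z)) θ = CoMn g θ := by
  unfold Mn CoMn Bern
  rw [sum_group_count (fun z => g (countMap n z) * ∏ x, θ x ^ (countMap n z).1 x)]
  refine Finset.sum_congr rfl fun m _ => ?_
  have h1 : ∀ z ∈ Finset.univ.filter (fun z => countMap n z = m),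
      g (countMap n z) * ∏ x, θ x ^ (countMap n z).1 x = g m * ∏ x, θ x ^ m.1 x := by
    intro z hz; simp only [Finset.mem_filter] at hz; rw [hz.2]
  rw [Finset.sum_congr rfl h1, Finset.sum_const, card_fiber, nsmul_eq_mul]
  ring

lemma sum_bern {n : ℕ} (θ : X → ℝ) :
    ∑ m : CVec X n, Bern m θ = (∑ x, θ x) ^ n := by
  have h := Mn_comp_count (fun _ : CVec X n => (1 : ℝ)) θ
  unfold Mn CoMn at h
  simp only [one_mul] at h
  rw [← h, ← sum_prod_theta n θ]
  exact Finset.sum_congr rfl fun z _ => prod_pow_count θ z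

end Alg
section Coh
set_option linter.unusedSectionVars false

lemma coh_zero {Ω : Type*} [Fintype Ω] [Nonempty Ω] {P : (Ω → ℝ) → ℝ}
    (hP : LowerPrevCoherent P) : P (fun _ => 0) = 0 := by
  have := hP.2.1 (fun _ => 0) 0 le_rfl
  simpa using this

lemma coh_sum {Ω : Type*} [Fintype Ω] [Nonempty Ω] {P : (Ω → ℝ) → ℝ}
    (hP : LowerPrevCoherent P) {ι : Type*} (s : Finset ι) (h : ι → Ω → ℝ) :
    ∑ i ∈ s, P (h i) ≤ P (fun ω => ∑ i ∈ s, h i ω) := by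
  classical
  induction s using Finset.induction_on with
  | empty => simp [coh_zero hP]
  | @insert a s ha ih =>
    rw [Finset.sum_insert ha]
    have key : (fun ω => ∑ i ∈ insert a s, h i ω)
        = h a + (fun ω => ∑ i ∈ s, h i ω) := by
      funext ω; simp [Finset.sum_insert ha]
    rw [key]
    calc P (h a) + ∑ i ∈ s, P (h i) ≤ P (h a) + P (fun ω => ∑ i ∈ s, h i ω) := by
          exact add_le_add_right ih _
      _ ≤ _ := hP.2.2 _ _

variable {X : Type*} [Fintype X] [DecidableEq X] [Nonempty X]

lemma MuHy_eq_avg {n : ℕ} (f : (Fin n → X) → ℝ) (z : Fin n → X) :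
    MuHy f (countMap n z)
      = (n.factorial : ℝ)⁻¹ * ∑ σ : Equiv.Perm (Fin n), f (z ∘ σ) := by
  rw [sum_perm_eq z f]
  unfold MuHy
  rw [nsmul_eq_mul]
  have hspec : ((∏ x, ((countMap n z).1 x).factorial : ℕ) : ℝ) * (nu (countMap n z) : ℝ)
      = (n.factorial : ℝ) := by exact_mod_cast congrArg Nat.cast (nu_spec (countMap n z))
  have hne : (n.factorial : ℝ) ≠ 0 := Nat.cast_ne_zero.mpr (Nat.factorial_pos n).ne'
  have hν := nu_ne_zero_real (countMap n z)
  have h : (nu (countMap n z) : ℝ)⁻¹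
      = (n.factorial : ℝ)⁻¹ * ((∏ x, ((countMap n z).1 x).factorial : ℕ) : ℝ) := by
    field_simp
    push_cast at hspec
    push_cast; linarith [hspec]
  rw [div_eq_mul_inv, h]
  ring

lemma sym_invariance {n : ℕ} {P : ((Fin n → X) → ℝ) → ℝ}
    (hP : LowerPrevCoherent P) (hE : Exchangeable P) (f : (Fin n → X) → ℝ) :
    P f = P (fun z => MuHy f (countMap n z)) := by
  classical
  have hcard : (Finset.univ : Finset (Equiv.Perm (Fin n))).card = n.factorial := by
    rw [Finset.card_univ, Fintype.card_perm, Fintype.card_fin]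
  set c : ℝ := (n.factorial : ℝ)⁻¹ with hc
  have hc0 : 0 ≤ c := inv_nonneg.mpr (Nat.cast_nonneg _)
  have hne : (n.factorial : ℝ) ≠ 0 := Nat.cast_ne_zero.mpr (Nat.factorial_pos n).ne'
  have hcn : c * (n.factorial : ℝ) = 1 := inv_mul_cancel₀ hne
  set E : (Fin n → X) → ℝ := fun z => MuHy f (countMap n z) with hEdef
  have hEavg : ∀ z, E z = c * ∑ σ : Equiv.Perm (Fin n), f (z ∘ σ) := fun z => MuHy_eq_avg f z
  -- each increment has nonneg P
  have hinc : ∀ σ : Equiv.Perm (Fin n),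
      0 ≤ P (fun z => c * (f (fun k => z (σ k)) - f z)) := by
    intro σ
    rw [hP.2.1 _ c hc0]
    exact mul_nonneg hc0 (hE f σ)
  have hinc' : ∀ σ : Equiv.Perm (Fin n),
      0 ≤ P (fun z => c * (f z - f (fun k => z (σ k)))) := by
    intro σ
    rw [hP.2.1 _ c hc0]
    refine mul_nonneg hc0 ?_
    have := hE (fun x => f (fun k => x (σ k))) σ.symm
    have heq : (fun x => (fun x' => f (fun k => x' (σ k))) (fun k => x (σ.symm k))
        - (fun x' => f (fun k => x' (σ k))) x)
        = fun x => f x - f (fun k => x (σ k)) := by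
      funext x
      have hx : (fun k => x (σ.symm (σ k))) = x := by
        funext k; rw [Equiv.symm_apply_apply]
      show f (fun k => x (σ.symm (σ k))) - f (fun k => x (σ k))
          = f x - f (fun k => x (σ k))
      rw [hx]
    rwa [heq] at this
  -- E = f + sum of increments
  have hEsum : E = f + (fun z => ∑ σ : Equiv.Perm (Fin n), c * (f (fun k => z (σ k)) - f z)) := by
    funext z
    simp only [Pi.add_apply]
    rw [hEavg z]
    rw [Finset.mul_sum]
    have : ∀ σ : Equiv.Perm (Fin n), c * (f (fun k => z (σ k)) - f z)
        = c * f (z ∘ σ) - c * f z := fun σ => by rw [mul_sub]; rfl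
    rw [Finset.sum_congr rfl (fun σ _ => this σ), Finset.sum_sub_distrib,
      Finset.sum_const, hcard, nsmul_eq_mul]
    simp only [hc]
    field_simp
    ring
  have hfsum : f = E + (fun z => ∑ σ : Equiv.Perm (Fin n), c * (f z - f (fun k => z (σ k)))) := by
    funext z
    simp only [Pi.add_apply]
    rw [hEavg z]
    rw [Finset.mul_sum]
    have : ∀ σ : Equiv.Perm (Fin n), c * (f z - f (fun k => z (σ k)))
        = c * f z - c * f (z ∘ σ) := fun σ => by rw [mul_sub]; rfl
    rw [Finset.sum_congr rfl (fun σ _ => this σ), Finset.sum_sub_distrib,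
      Finset.sum_const, hcard, nsmul_eq_mul]
    simp only [hc]
    field_simp
    ring
  have h1 : P f ≤ P E := by
    conv_rhs => rw [hEsum]
    calc P f = P f + 0 := by ring
      _ ≤ P f + P (fun z => ∑ σ : Equiv.Perm (Fin n), c * (f (fun k => z (σ k)) - f z)) := by
          refine add_le_add_right ?_ _
          calc (0:ℝ) = ∑ σ : Equiv.Perm (Fin n), (0:ℝ) := by simp
            _ ≤ ∑ σ : Equiv.Perm (Fin n), P (fun z => c * (f (fun k => z (σ k)) - f z)) :=
                Finset.sum_le_sum fun σ _ => hinc σ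
            _ ≤ _ := coh_sum hP _ _
      _ ≤ _ := hP.2.2 _ _
  have h2 : P E ≤ P f := by
    conv_rhs => rw [hfsum]
    calc P E = P E + 0 := by ring
      _ ≤ P E + P (fun z => ∑ σ : Equiv.Perm (Fin n), c * (f z - f (fun k => z (σ k)))) := by
          refine add_le_add_right ?_ _
          calc (0:ℝ) = ∑ σ : Equiv.Perm (Fin n), (0:ℝ) := by simp
            _ ≤ ∑ σ : Equiv.Perm (Fin n), P (fun z => c * (f z - f (fun k => z (σ k)))) :=
                Finset.sum_le_sum fun σ _ => hinc' σ
            _ ≤ _ := coh_sum hP _ _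
      _ ≤ _ := hP.2.2 _ _
  exact le_antisymm h1 h2

end Coh
section Split
set_option linter.unusedSectionVars false
variable {X : Type*} [Fintype X] [DecidableEq X]

/-- Splitting equivalence `X^n × X^k ≃ X^{n+k}`. -/
def pairEquiv (n k : ℕ) (X : Type*) : ((Fin n → X) × (Fin k → X)) ≃ (Fin (n + k) → X) :=
  (Equiv.sumArrowEquivProdArrow (Fin n) (Fin k) X).symm.trans
    (Equiv.arrowCongr finSumFinEquiv (Equiv.refl X))

lemma pairEquiv_castLE {n k : ℕ} (z₁ : Fin n → X) (z₂ : Fin k → X) (i : Fin n) :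
    pairEquiv n k X (z₁, z₂) (Fin.castLE (Nat.le_add_right n k) i) = z₁ i := by
  show (Equiv.refl X) (Sum.elim z₁ z₂ (finSumFinEquiv.symm (Fin.castLE (Nat.le_add_right n k) i))) = z₁ i
  have h : (Fin.castLE (Nat.le_add_right n k) i) = Fin.castAdd k i := rfl
  rw [h, finSumFinEquiv_symm_apply_castAdd]
  rfl

lemma pairEquiv_inl {n k : ℕ} (z₁ : Fin n → X) (z₂ : Fin k → X) (i : Fin n) :
    pairEquiv n k X (z₁, z₂) (finSumFinEquiv (Sum.inl i)) = z₁ i := by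
  show (Equiv.refl X) (Sum.elim z₁ z₂ (finSumFinEquiv.symm (finSumFinEquiv (Sum.inl i)))) = z₁ i
  rw [Equiv.symm_apply_apply]; rfl

lemma pairEquiv_inr {n k : ℕ} (z₁ : Fin n → X) (z₂ : Fin k → X) (i : Fin k) :
    pairEquiv n k X (z₁, z₂) (finSumFinEquiv (Sum.inr i)) = z₂ i := by
  show (Equiv.refl X) (Sum.elim z₁ z₂ (finSumFinEquiv.symm (finSumFinEquiv (Sum.inr i)))) = z₂ i
  rw [Equiv.symm_apply_apply]; rfl

lemma cylExt_pairEquiv {n k : ℕ} (f : (Fin n → X) → ℝ) (z₁ : Fin n → X) (z₂ : Fin k → X) :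
    cylExt (k := k) f (pairEquiv n k X (z₁, z₂)) = f z₁ := by
  unfold cylExt
  congr 1
  funext i
  exact pairEquiv_castLE z₁ z₂ i

lemma prod_pairEquiv {n k : ℕ} (θ : X → ℝ) (z₁ : Fin n → X) (z₂ : Fin k → X) :
    ∏ j, θ (pairEquiv n k X (z₁, z₂) j) = (∏ j, θ (z₁ j)) * ∏ j, θ (z₂ j) := by
  rw [← Equiv.prod_comp finSumFinEquiv (fun j => θ (pairEquiv n k X (z₁, z₂) j))]
  rw [Fintype.prod_sum_type]
  congr 1
  · exact Finset.prod_congr rfl fun i _ => by rw [pairEquiv_inl]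
  · exact Finset.prod_congr rfl fun i _ => by rw [pairEquiv_inr]

lemma countMap_pairEquiv {n k : ℕ} (z₁ : Fin n → X) (z₂ : Fin k → X) (x : X) :
    (countMap (n + k) (pairEquiv n k X (z₁, z₂))).1 x
      = (countMap n z₁).1 x + (countMap k z₂).1 x := by
  show (Finset.univ.filter fun j => pairEquiv n k X (z₁, z₂) j = x).card = _ + _
  rw [Finset.card_filter, ← Equiv.sum_comp finSumFinEquiv
    (fun j => if pairEquiv n k X (z₁, z₂) j = x then 1 else 0), Fintype.sum_sum_type]
  congr 1
  · rw [Finset.sum_congr rfl (fun i _ => by rw [pairEquiv_inl]), ← Finset.card_filter]; rfl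
  · rw [Finset.sum_congr rfl (fun i _ => by rw [pairEquiv_inr]), ← Finset.card_filter]; rfl

lemma Mn_cylExt {n k : ℕ} (f : (Fin n → X) → ℝ) (θ : X → ℝ) :
    Mn (cylExt (k := k) f) θ = Mn f θ * (∑ x, θ x) ^ k := by
  rw [Mn_eq, Mn_eq, ← sum_prod_theta k θ]
  rw [← Equiv.sum_comp (pairEquiv n k X)
    (fun w => cylExt (k := k) f w * ∏ j, θ (w j))]
  rw [Fintype.sum_prod_type, Finset.sum_mul_sum]
  refine Finset.sum_congr rfl fun z₁ _ => Finset.sum_congr rfl fun z₂ _ => ?_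
  rw [cylExt_pairEquiv, prod_pairEquiv]
  ring

end Split
section Indep
set_option linter.unusedSectionVars false
variable {X : Type*} [Fintype X] [DecidableEq X] [Nonempty X]

lemma cvec_le {n : ℕ} (m : CVec X n) (x : X) : m.1 x ≤ n := by
  have := Finset.single_le_sum (f := m.1) (fun i _ => Nat.zero_le _) (Finset.mem_univ x)
  omega

noncomputable def expo {n : ℕ} (m : CVec X n) : ℕ :=
  ∑ x, m.1 x * (n + 1) ^ ((Fintype.equivFin X) x : ℕ)

lemma expo_inj {n : ℕ} : Function.Injective (expo : CVec X n → ℕ) := by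
  intro m m' h
  set e := Fintype.equivFin X with he
  have key : ∀ mm : CVec X n, expo mm
      = ((finFunctionFinEquiv (fun i : Fin (Fintype.card X) =>
          (⟨mm.1 (e.symm i), Nat.lt_succ_of_le (cvec_le mm _)⟩ : Fin (n+1)))) : ℕ) := by
    intro mm
    rw [finFunctionFinEquiv_apply]
    unfold expo
    rw [← Equiv.sum_comp e.symm (fun x => mm.1 x * (n + 1) ^ ((e x : ℕ)))]
    refine Finset.sum_congr rfl fun i _ => ?_
    rw [Equiv.apply_symm_apply]
  have h2 : (fun i : Fin (Fintype.card X) =>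
        (⟨m.1 (e.symm i), Nat.lt_succ_of_le (cvec_le m _)⟩ : Fin (n+1)))
      = (fun i => (⟨m'.1 (e.symm i), Nat.lt_succ_of_le (cvec_le m' _)⟩ : Fin (n+1))) := by
    apply finFunctionFinEquiv.injective
    apply Fin.ext
    rw [← key m, ← key m', h]
  refine Subtype.ext (funext fun x => ?_)
  have := congrFun h2 (e x)
  have h3 : m.1 (e.symm (e x)) = m'.1 (e.symm (e x)) := congrArg Fin.val this
  rwa [Equiv.symm_apply_apply] at h3

lemma monomial_indep {n : ℕ} (c : CVec X n → ℝ)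
    (h : ∀ θ : SimplexPt X, ∑ m : CVec X n, c m * ∏ x, θ.1 x ^ m.1 x = 0) :
    ∀ m, c m = 0 := by
  -- Step 1: extend to the positive orthant by homogeneity
  have step1 : ∀ t : X → ℝ, (∀ x, 0 < t x) →
      ∑ m : CVec X n, c m * ∏ x, t x ^ m.1 x = 0 := by
    intro t ht
    have hs : 0 < ∑ x, t x := Finset.sum_pos (fun x _ => ht x) Finset.univ_nonempty
    set s := ∑ x, t x with hsdef
    have hθ : ∀ x, 0 ≤ t x / s := fun x => div_nonneg (ht x).le hs.le
    have hθs : ∑ x, t x / s = 1 := by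
      rw [← Finset.sum_div]; exact div_self hs.ne'
    have h0 := h ⟨fun x => t x / s, hθ, hθs⟩
    change ∑ m : CVec X n, c m * ∏ x, (t x / s) ^ m.1 x = 0 at h0
    have hprod : ∀ m : CVec X n, ∏ x, (t x / s) ^ m.1 x = (∏ x, t x ^ m.1 x) / s ^ n := by
      intro m
      have hsn : s ^ n = ∏ x, s ^ m.1 x := by
        rw [Finset.prod_pow_eq_pow_sum, m.2]
      rw [hsn, ← Finset.prod_div_distrib]
      exact Finset.prod_congr rfl fun x _ => div_pow _ _ _
    simp only [hprod] at h0
    have h1 : (∑ m : CVec X n, c m * ((∏ x, t x ^ m.1 x) / s ^ n)) * s ^ n = 0 := by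
      rw [h0]; ring
    rw [Finset.sum_mul] at h1
    have h2 : ∀ m : CVec X n, c m * ((∏ x, t x ^ m.1 x) / s ^ n) * s ^ n
        = c m * ∏ x, t x ^ m.1 x := by
      intro m
      field_simp
    rwa [Finset.sum_congr rfl fun m _ => h2 m] at h1
  -- Step 2: polynomial argument
  set p : Polynomial ℝ := ∑ m : CVec X n, Polynomial.C (c m) * Polynomial.X ^ (expo m) with hp
  have hroots : ∀ b : ℝ, 0 < b → p.eval b = 0 := by
    intro b hb
    have heval : p.eval b = ∑ m : CVec X n, c m * b ^ (expo m) := by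
      rw [hp, Polynomial.eval_finset_sum]
      exact Finset.sum_congr rfl fun m _ => by simp
    rw [heval]
    have hs := step1 (fun x => b ^ ((n + 1) ^ ((Fintype.equivFin X) x : ℕ)))
      (fun x => pow_pos hb _)
    rw [← hs]
    refine Finset.sum_congr rfl fun m _ => ?_
    congr 1
    calc b ^ expo m = b ^ ∑ x, ((n + 1) ^ ((Fintype.equivFin X) x : ℕ)) * m.1 x := by
          unfold expo
          congr 1
          exact Finset.sum_congr rfl fun x _ => mul_comm _ _
      _ = ∏ x, b ^ (((n + 1) ^ ((Fintype.equivFin X) x : ℕ)) * m.1 x) :=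
          (Finset.prod_pow_eq_pow_sum Finset.univ _ b).symm
      _ = ∏ x, (b ^ ((n + 1) ^ ((Fintype.equivFin X) x : ℕ))) ^ m.1 x :=
          Finset.prod_congr rfl fun x _ => pow_mul b _ _
  have hp0 : p = 0 := by
    refine Polynomial.eq_zero_of_infinite_isRoot p ?_
    refine Set.Infinite.mono ?_ (Set.Ioi_infinite (0:ℝ))
    intro b hb
    exact hroots b hb
  intro m
  have hcoeff : p.coeff (expo m) = c m := by
    rw [hp, Polynomial.finset_sum_coeff]
    rw [Finset.sum_eq_single m]
    · simp [Polynomial.coeff_C_mul, Polynomial.coeff_X_pow]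
    · intro m' _ hne
      rw [Polynomial.coeff_C_mul, Polynomial.coeff_X_pow]
      rw [if_neg (fun hh : expo m = expo m' => hne (expo_inj hh.symm))]
      ring
    · intro hm; exact absurd (Finset.mem_univ m) hm
  rw [← hcoeff, hp0, Polynomial.coeff_zero]

end Indep
section Hyper
set_option linter.unusedSectionVars false
variable {X : Type*} [Fintype X] [DecidableEq X]

/-- number of tails with complementary count -/
def ucard {n k : ℕ} (m : CVec X n) (μ : CVec X (n + k)) : ℕ :=
  (Finset.univ.filter (fun z₂ : Fin k → X => ∀ x, m.1 x + (countMap k z₂).1 x = μ.1 x)).card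

lemma hyper_formula {n k : ℕ} (g : CVec X n → ℝ) (μ : CVec X (n + k)) :
    ∑ z ∈ Finset.univ.filter (fun z : Fin (n + k) → X => countMap (n + k) z = μ),
        g (countMap n (fun i => z (Fin.castLE (Nat.le_add_right n k) i)))
      = ∑ m : CVec X n, ((nu m * ucard m μ : ℕ) : ℝ) * g m := by
  rw [Finset.sum_filter]
  rw [← Equiv.sum_comp (pairEquiv n k X) (fun z => if countMap (n + k) z = μ then
      g (countMap n (fun i => z (Fin.castLE (Nat.le_add_right n k) i))) else 0)]
  rw [Fintype.sum_prod_type]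
  have inner : ∀ z₁ : Fin n → X,
      (∑ z₂ : Fin k → X, if countMap (n + k) (pairEquiv n k X (z₁, z₂)) = μ then
        g (countMap n (fun i => pairEquiv n k X (z₁, z₂) (Fin.castLE (Nat.le_add_right n k) i)))
        else 0)
      = (ucard (countMap n z₁) μ : ℝ) * g (countMap n z₁) := by
    intro z₁
    have hbody : ∀ z₂ : Fin k → X,
        (if countMap (n + k) (pairEquiv n k X (z₁, z₂)) = μ then
          g (countMap n (fun i => pairEquiv n k X (z₁, z₂) (Fin.castLE (Nat.le_add_right n k) i)))
          else 0)
        = (if (∀ x, (countMap n z₁).1 x + (countMap k z₂).1 x = μ.1 x) then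
            g (countMap n z₁) else 0) := by
      intro z₂
      have hcond : (countMap (n + k) (pairEquiv n k X (z₁, z₂)) = μ)
          ↔ (∀ x, (countMap n z₁).1 x + (countMap k z₂).1 x = μ.1 x) := by
        rw [Subtype.ext_iff, funext_iff]
        constructor
        · intro hh x; rw [← hh x, countMap_pairEquiv]
        · intro hh x; rw [countMap_pairEquiv]; exact hh x
      have harg : (fun i => pairEquiv n k X (z₁, z₂) (Fin.castLE (Nat.le_add_right n k) i)) = z₁ := by
        funext i; exact pairEquiv_castLE z₁ z₂ i
      rw [harg]
      by_cases hcase : countMap (n + k) (pairEquiv n k X (z₁, z₂)) = μ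
      · rw [if_pos hcase, if_pos (hcond.mp hcase)]
      · rw [if_neg hcase, if_neg (fun hh => hcase (hcond.mpr hh))]
    rw [Finset.sum_congr rfl (fun z₂ _ => hbody z₂), Finset.sum_ite, Finset.sum_const_zero,
      Finset.sum_const, add_zero, nsmul_eq_mul]
    rfl
  rw [Finset.sum_congr rfl (fun z₁ _ => inner z₁)]
  rw [sum_group_count (fun z₁ => (ucard (countMap n z₁) μ : ℝ) * g (countMap n z₁))]
  refine Finset.sum_congr rfl fun m _ => ?_
  have h1 : ∀ z₁ ∈ Finset.univ.filter (fun z₁ : Fin n → X => countMap n z₁ = m),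
      (ucard (countMap n z₁) μ : ℝ) * g (countMap n z₁) = (ucard m μ : ℝ) * g m := by
    intro z₁ hz₁; simp only [Finset.mem_filter] at hz₁; rw [hz₁.2]
  rw [Finset.sum_congr rfl h1, Finset.sum_const, card_fiber, nsmul_eq_mul]
  push_cast
  ring

lemma ucard_eq_zero {n k : ℕ} (m : CVec X n) (μ : CVec X (n + k))
    (h : ¬ ∀ x, m.1 x ≤ μ.1 x) : ucard m μ = 0 := by
  unfold ucard
  rw [Finset.card_eq_zero, Finset.filter_eq_empty_iff]
  intro z₂ _
  intro hall
  exact h (fun x => le_of_add_le_left (le_of_eq (hall x)))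

lemma ucard_eq_nu {n k : ℕ} (m : CVec X n) (μ : CVec X (n + k))
    (h : ∀ x, m.1 x ≤ μ.1 x) :
    ucard m μ = Nat.multinomial Finset.univ (fun x => μ.1 x - m.1 x) := by
  have hsum : ∑ x, (μ.1 x - m.1 x) = k := by
    have h1 : ∑ x, (μ.1 x - m.1 x) = (∑ x, μ.1 x) - ∑ x, m.1 x :=
      Finset.sum_tsub_distrib Finset.univ (fun x _ => h x)
    rw [h1, μ.2, m.2]
    omega
  set ν : CVec X k := ⟨fun x => μ.1 x - m.1 x, hsum⟩ with hν
  have : ucard m μ = (Finset.univ.filter (fun z₂ : Fin k → X => countMap k z₂ = ν)).card := by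
    unfold ucard
    congr 1
    apply Finset.filter_congr
    intro z₂ _
    constructor
    · intro hall
      refine Subtype.ext (funext fun x => ?_)
      have := hall x
      have hle := h x
      show (countMap k z₂).1 x = μ.1 x - m.1 x
      omega
    · intro heq x
      have : (countMap k z₂).1 x = μ.1 x - m.1 x := by rw [heq]
      have hle := h x
      omega
  rw [this, card_fiber]
  rfl

lemma weight_nat_eq {n k : ℕ} (m : CVec X n) (μ : CVec X (n + k))
    (h : ∀ x, m.1 x ≤ μ.1 x) :
    ucard m μ * Nat.descFactorial (n + k) n
      = nu μ * ∏ x, Nat.descFactorial (μ.1 x) (m.1 x) := by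
  rw [ucard_eq_nu m μ h]
  set A : ℕ := ∏ x, (μ.1 x - m.1 x).factorial with hA
  have hApos : 0 < A := Finset.prod_pos fun x _ => Nat.factorial_pos _
  apply Nat.eq_of_mul_eq_mul_left hApos
  have hsum : ∑ x, (μ.1 x - m.1 x) = k := by
    have h1 : ∑ x, (μ.1 x - m.1 x) = (∑ x, μ.1 x) - ∑ x, m.1 x :=
      Finset.sum_tsub_distrib Finset.univ (fun x _ => h x)
    rw [h1, μ.2, m.2]; omega
  have hL : A * (Nat.multinomial Finset.univ (fun x => μ.1 x - m.1 x)
      * Nat.descFactorial (n + k) n) = (n + k).factorial := by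
    rw [← mul_assoc]
    have hspec := Nat.multinomial_spec Finset.univ (fun x => μ.1 x - m.1 x)
    rw [hsum] at hspec
    rw [hA]
    rw [hspec]
    have : n ≤ n + k := Nat.le_add_right n k
    have := Nat.factorial_mul_descFactorial this
    simpa [Nat.add_sub_cancel_left] using this
  have hR : A * (nu μ * ∏ x, Nat.descFactorial (μ.1 x) (m.1 x)) = (n + k).factorial := by
    have hfac : ∀ x, (μ.1 x - m.1 x).factorial * Nat.descFactorial (μ.1 x) (m.1 x)
        = (μ.1 x).factorial := fun x => Nat.factorial_mul_descFactorial (h x)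
    calc A * (nu μ * ∏ x, Nat.descFactorial (μ.1 x) (m.1 x))
        = (∏ x, (μ.1 x - m.1 x).factorial * Nat.descFactorial (μ.1 x) (m.1 x)) * nu μ := by
          rw [Finset.prod_mul_distrib]; ring
      _ = (∏ x, (μ.1 x).factorial) * nu μ := by
          rw [Finset.prod_congr rfl fun x _ => hfac x]
      _ = (n + k).factorial := nu_spec μ
  rw [hL, hR]

end Hyper
section Bound
set_option linter.unusedSectionVars false
variable {X : Type*} [Fintype X] [DecidableEq X]

lemma wgt_sum_one {n k : ℕ} (μ : CVec X (n + k)) :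
    ∑ m : CVec X n, ((nu m * ucard m μ : ℕ) : ℝ) = (nu μ : ℝ) := by
  have h := hyper_formula (fun _ : CVec X n => (1 : ℝ)) μ
  simp only [mul_one] at h
  rw [← h, Finset.sum_const, card_fiber, nsmul_eq_mul, mul_one]

lemma wgt_le {n k : ℕ} (hN : 0 < n + k) (m : CVec X n) (μ : CVec X (n + k)) :
    ((nu m * ucard m μ : ℕ) : ℝ) / (nu μ : ℝ)
      ≤ (((n + k : ℕ) : ℝ) ^ n / (Nat.descFactorial (n + k) n : ℝ))
        * Bern m (fun x => (μ.1 x : ℝ) / ((n + k : ℕ) : ℝ)) := by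
  have hdesc : (0 : ℝ) < (Nat.descFactorial (n + k) n : ℝ) := by
    have hne : (n + k).descFactorial n ≠ 0 := fun h0 =>
      absurd (Nat.descFactorial_eq_zero_iff_lt.mp h0) (by omega)
    exact_mod_cast Nat.pos_of_ne_zero hne
  have hNpos : (0 : ℝ) < ((n + k : ℕ) : ℝ) := by exact_mod_cast hN
  have hBern : Bern m (fun x => (μ.1 x : ℝ) / ((n + k : ℕ) : ℝ))
      = (nu m : ℝ) * (∏ x, (μ.1 x : ℝ) ^ m.1 x) / ((n + k : ℕ) : ℝ) ^ n := by
    unfold Bern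
    have hsn : ((n + k : ℕ) : ℝ) ^ n = ∏ x, ((n + k : ℕ) : ℝ) ^ m.1 x := by
      rw [Finset.prod_pow_eq_pow_sum, m.2]
    rw [mul_div_assoc, hsn, ← Finset.prod_div_distrib]
    congr 1
    exact Finset.prod_congr rfl fun x _ => div_pow _ _ _
  rw [hBern]
  have hrhs : (((n + k : ℕ) : ℝ) ^ n / (Nat.descFactorial (n + k) n : ℝ))
      * ((nu m : ℝ) * (∏ x, (μ.1 x : ℝ) ^ m.1 x) / ((n + k : ℕ) : ℝ) ^ n)
      = (nu m : ℝ) * (∏ x, (μ.1 x : ℝ) ^ m.1 x) / (Nat.descFactorial (n + k) n : ℝ) := by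
    have hnk : (0:ℝ) < (n:ℝ) + (k:ℝ) := by push_cast at hNpos; linarith
    field_simp
  rw [hrhs]
  by_cases hle : ∀ x, m.1 x ≤ μ.1 x
  · rw [div_le_div_iff₀ (by exact_mod_cast nu_pos μ) hdesc]
    have hnat : (nu m * ucard m μ) * Nat.descFactorial (n + k) n
        ≤ nu m * (∏ x, (μ.1 x) ^ m.1 x) * nu μ := by
      calc (nu m * ucard m μ) * Nat.descFactorial (n + k) n
          = nu m * (ucard m μ * Nat.descFactorial (n + k) n) := by ring
        _ = nu m * (nu μ * ∏ x, Nat.descFactorial (μ.1 x) (m.1 x)) := by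
            rw [weight_nat_eq m μ hle]
        _ ≤ nu m * (nu μ * ∏ x, (μ.1 x) ^ m.1 x) := by
            refine Nat.mul_le_mul_left _ (Nat.mul_le_mul_left _ ?_)
            exact Finset.prod_le_prod' fun x _ => Nat.descFactorial_le_pow _ _
        _ = nu m * (∏ x, (μ.1 x) ^ m.1 x) * nu μ := by ring
    calc ((nu m * ucard m μ : ℕ) : ℝ) * (Nat.descFactorial (n + k) n : ℝ)
        = (((nu m * ucard m μ) * Nat.descFactorial (n + k) n : ℕ) : ℝ) := by push_cast; ring
      _ ≤ ((nu m * (∏ x, (μ.1 x) ^ m.1 x) * nu μ : ℕ) : ℝ) := by exact_mod_cast hnat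
      _ = (nu m : ℝ) * (∏ x, (μ.1 x : ℝ) ^ m.1 x) * (nu μ : ℝ) := by push_cast; ring
  · rw [ucard_eq_zero m μ hle]
    simp only [mul_zero, Nat.cast_zero, zero_div]
    positivity

lemma A_tendsto (n : ℕ) :
    Filter.Tendsto (fun k : ℕ => ((n + k : ℕ) : ℝ) ^ n / (Nat.descFactorial (n + k) n : ℝ))
      Filter.atTop (nhds 1) := by
  have hA : ∀ k : ℕ, ((n + k : ℕ) : ℝ) ^ n / (Nat.descFactorial (n + k) n : ℝ)
      = ∏ i ∈ Finset.range n, (((n + k : ℕ) : ℝ) / ((n + k - i : ℕ) : ℝ)) := by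
    intro k
    rw [Finset.prod_div_distrib, Finset.prod_const, Finset.card_range]
    congr 1
    rw [Nat.descFactorial_eq_prod_range]
    push_cast
    rfl
  simp only [hA]
  have h1 : (1 : ℝ) = ∏ i ∈ Finset.range n, (1 : ℝ) := by simp
  rw [h1]
  refine tendsto_finset_prod _ fun i hi => ?_
  have hi' : i < n := Finset.mem_range.mp hi
  have heq : ∀ k : ℕ, ((n + k : ℕ) : ℝ) / ((n + k - i : ℕ) : ℝ)
      = 1 + (i : ℝ) * (((n : ℝ) + (k : ℝ) - (i : ℝ)))⁻¹ := by
    intro k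
    have hle : i ≤ n + k := le_trans hi'.le (Nat.le_add_right n k)
    have hcast : ((n + k - i : ℕ) : ℝ) = (n : ℝ) + (k : ℝ) - (i : ℝ) := by
      push_cast [Nat.cast_sub hle]
      ring
    have hpos : (0 : ℝ) < (n : ℝ) + (k : ℝ) - (i : ℝ) := by
      have : (i : ℝ) < (n : ℝ) := by exact_mod_cast hi'
      have hk : (0 : ℝ) ≤ (k : ℝ) := Nat.cast_nonneg k
      linarith
    rw [hcast]
    field_simp
    push_cast; ring
  simp only [heq]
  have htail : Filter.Tendsto (fun k : ℕ => ((n : ℝ) + (k : ℝ) - (i : ℝ))) Filter.atTop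
      Filter.atTop := by
    apply Filter.tendsto_atTop_add_const_right
    apply Filter.tendsto_atTop_add_const_left
    exact tendsto_natCast_atTop_atTop
  have hinv : Filter.Tendsto (fun k : ℕ => (((n : ℝ) + (k : ℝ) - (i : ℝ)))⁻¹) Filter.atTop
      (nhds 0) := htail.inv_tendsto_atTop
  have := (tendsto_const_nhds (x := (1:ℝ)) (f := Filter.atTop (α := ℕ))).add
    ((tendsto_const_nhds (x := (i:ℝ)) (f := Filter.atTop (α := ℕ))).mul hinv)
  simpa using this

end Bound
section MainLemmas
set_option linter.unusedSectionVars false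
variable {X : Type*} [Fintype X] [DecidableEq X] [Nonempty X]

instance : Nonempty (SimplexPt X) := ⟨freqPt Nat.one_pos (Classical.arbitrary (CVec X 1))⟩

lemma bern_nonneg {n : ℕ} (m : CVec X n) (θ : SimplexPt X) : 0 ≤ Bern m θ.1 :=
  mul_nonneg (Nat.cast_nonneg _)
    (Finset.prod_nonneg fun x _ => pow_nonneg (θ.2.1 x) _)

lemma sum_bern_simplex {n : ℕ} (θ : SimplexPt X) :
    ∑ m : CVec X n, Bern m θ.1 = 1 := by
  rw [sum_bern, θ.2.2, one_pow]

lemma P_eq_Q_MuHy (P : ∀ n : ℕ, ((Fin n → X) → ℝ) → ℝ)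
    (Q : ∀ n : ℕ, (CVec X n → ℝ) → ℝ)
    (hP : ∀ n : ℕ, 1 ≤ n → LowerPrevCoherent (P n) ∧ Exchangeable (P n))
    (hQ : ∀ (n : ℕ) (h : CVec X n → ℝ), Q n h = P n (fun z => h (countMap n z)))
    {n : ℕ} (hn : 1 ≤ n) (f : (Fin n → X) → ℝ) :
    P n f = Q n (MuHy f) := by
  rw [hQ]
  exact sym_invariance (hP n hn).1 (hP n hn).2 f

lemma lift_exact (P : ∀ n : ℕ, ((Fin n → X) → ℝ) → ℝ)
    (Q : ∀ n : ℕ, (CVec X n → ℝ) → ℝ)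
    (hP : ∀ n : ℕ, 1 ≤ n → LowerPrevCoherent (P n) ∧ Exchangeable (P n))
    (htc : PTimeConsistent P)
    (hQ : ∀ (n : ℕ) (h : CVec X n → ℝ), Q n h = P n (fun z => h (countMap n z)))
    {n : ℕ} (hn : 1 ≤ n) (k : ℕ) (g : CVec X n → ℝ) :
    Q n g = Q (n + k) (MuHy (cylExt (k := k) (fun z => g (countMap n z)))) := by
  rw [hQ n g, htc n hn k (fun z => g (countMap n z))]
  exact P_eq_Q_MuHy P Q hP hQ (le_trans hn (Nat.le_add_right n k)) _

lemma poly_lift {n : ℕ} (k : ℕ) (g : CVec X n → ℝ) (θ : SimplexPt X) :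
    CoMn (MuHy (cylExt (k := k) (fun z => g (countMap n z)))) θ.1 = CoMn g θ.1 := by
  rw [CoMn_MuHy, Mn_cylExt, Mn_comp_count, θ.2.2, one_pow, mul_one]

/-- The key analytic lower bound. -/
lemma Q_lower (P : ∀ n : ℕ, ((Fin n → X) → ℝ) → ℝ)
    (Q : ∀ n : ℕ, (CVec X n → ℝ) → ℝ)
    (hP : ∀ n : ℕ, 1 ≤ n → LowerPrevCoherent (P n) ∧ Exchangeable (P n))
    (htc : PTimeConsistent P)
    (hQ : ∀ (n : ℕ) (h : CVec X n → ℝ), Q n h = P n (fun z => h (countMap n z)))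
    {n : ℕ} (hn : 1 ≤ n) (g : CVec X n → ℝ) :
    sInf (Set.range (CoMnP g)) ≤ Q n g := by
  classical
  set gmin : ℝ := Finset.univ.inf' Finset.univ_nonempty g with hgmin
  set gmax : ℝ := Finset.univ.sup' Finset.univ_nonempty g with hgmax
  have hp_ge : ∀ θ : SimplexPt X, gmin ≤ CoMnP g θ := by
    intro θ
    have h1 : gmin = ∑ m : CVec X n, gmin * Bern m θ.1 := by
      rw [← Finset.mul_sum, sum_bern_simplex, mul_one]
    unfold CoMnP CoMn
    rw [h1]
    exact Finset.sum_le_sum fun m _ => mul_le_mul_of_nonneg_right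
      (Finset.inf'_le _ (Finset.mem_univ m)) (bern_nonneg m θ)
  have hp_le_max : ∀ θ : SimplexPt X, CoMnP g θ ≤ gmax := by
    intro θ
    have h1 : gmax = ∑ m : CVec X n, gmax * Bern m θ.1 := by
      rw [← Finset.mul_sum, sum_bern_simplex, mul_one]
    unfold CoMnP CoMn
    rw [h1]
    exact Finset.sum_le_sum fun m _ => mul_le_mul_of_nonneg_right
      (Finset.le_sup' _ (Finset.mem_univ m)) (bern_nonneg m θ)
  have hbdd : BddBelow (Set.range (CoMnP g)) := by
    refine ⟨gmin, ?_⟩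
    rintro y ⟨θ, rfl⟩
    exact hp_ge θ
  set I : ℝ := sInf (Set.range (CoMnP g)) with hIdef
  set R : ℝ := gmax - gmin with hRdef
  have hR0 : 0 ≤ R := by
    have h1 := Finset.inf'_le g (Finset.mem_univ (Classical.arbitrary (CVec X n)))
    have h2 := Finset.le_sup' g (Finset.mem_univ (Classical.arbitrary (CVec X n)))
    rw [hRdef]
    rw [hgmax, hgmin]
    linarith
  set A : ℕ → ℝ := fun k => ((n + k : ℕ) : ℝ) ^ n / (Nat.descFactorial (n + k) n : ℝ)
    with hAdef
  have hdesc_pos : ∀ k : ℕ, (0 : ℝ) < (Nat.descFactorial (n + k) n : ℝ) := by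
    intro k
    have hne : (n + k).descFactorial n ≠ 0 := fun h0 =>
      absurd (Nat.descFactorial_eq_zero_iff_lt.mp h0) (by omega)
    exact_mod_cast Nat.pos_of_ne_zero hne
  have hA1 : ∀ k : ℕ, 1 ≤ A k := by
    intro k
    rw [hAdef]
    rw [le_div_iff₀ (hdesc_pos k), one_mul]
    exact_mod_cast Nat.descFactorial_le_pow _ _
  have hbound : ∀ k : ℕ, I - (A k - 1) * R ≤ Q n g := by
    intro k
    have hNpos : 0 < n + k := lt_of_lt_of_le hn (Nat.le_add_right n k)
    have hN1 : 1 ≤ n + k := hNpos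
    set hk : CVec X (n + k) → ℝ := MuHy (cylExt (k := k) (fun z => g (countMap n z)))
      with hhk
    have hpoint : ∀ μ : CVec X (n + k), I - (A k - 1) * R ≤ hk μ := by
      intro μ
      set θμ : SimplexPt X := freqPt hNpos μ with hθμ
      have hfreq : θμ.1 = fun x => (μ.1 x : ℝ) / ((n + k : ℕ) : ℝ) := rfl
      set w : CVec X n → ℝ := fun m => ((nu m * ucard m μ : ℕ) : ℝ) / (nu μ : ℝ) with hw
      have hkval : hk μ = ∑ m : CVec X n, w m * g m := by
        rw [hhk]
        show (∑ z ∈ Finset.univ.filter (fun z : Fin (n + k) → X => countMap (n + k) z = μ),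
            cylExt (k := k) (fun z' => g (countMap n z')) z) / (nu μ : ℝ) = _
        have hcyl : ∀ z : Fin (n + k) → X, cylExt (k := k) (fun z' => g (countMap n z')) z
            = g (countMap n (fun i => z (Fin.castLE (Nat.le_add_right n k) i))) := fun z => rfl
        rw [Finset.sum_congr rfl fun z _ => hcyl z, hyper_formula g μ, Finset.sum_div]
        exact Finset.sum_congr rfl fun m _ => mul_div_right_comm _ _ _
      have hw_nonneg : ∀ m, 0 ≤ w m := fun m =>
        div_nonneg (Nat.cast_nonneg _) (Nat.cast_nonneg _)
      have hw_sum : ∑ m : CVec X n, w m = 1 := by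
        rw [hw, ← Finset.sum_div, wgt_sum_one, div_self (nu_ne_zero_real μ)]
      have hw_le : ∀ m, w m ≤ A k * Bern m θμ.1 := by
        intro m
        rw [hfreq, hAdef]
        exact wgt_le hNpos m μ
      have hstep1 : hk μ = gmax + ∑ m : CVec X n, w m * (g m - gmax) := by
        rw [hkval]
        have : ∑ m : CVec X n, w m * (g m - gmax)
            = (∑ m : CVec X n, w m * g m) - gmax * ∑ m : CVec X n, w m := by
          rw [Finset.mul_sum, ← Finset.sum_sub_distrib]
          exact Finset.sum_congr rfl fun m _ => by ring
        rw [this, hw_sum]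
        ring
      have hstep2 : ∑ m : CVec X n, (A k * Bern m θμ.1) * (g m - gmax)
          ≤ ∑ m : CVec X n, w m * (g m - gmax) := by
        refine Finset.sum_le_sum fun m _ => ?_
        refine mul_le_mul_of_nonpos_right (hw_le m) ?_
        have := Finset.le_sup' g (Finset.mem_univ m)
        rw [hgmax]
        linarith
      have hstep3 : ∑ m : CVec X n, (A k * Bern m θμ.1) * (g m - gmax)
          = A k * (CoMnP g θμ - gmax) := by
        have : ∑ m : CVec X n, (A k * Bern m θμ.1) * (g m - gmax)
            = A k * ((∑ m : CVec X n, g m * Bern m θμ.1)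
              - gmax * ∑ m : CVec X n, Bern m θμ.1) := by
          calc ∑ m : CVec X n, (A k * Bern m θμ.1) * (g m - gmax)
              = ∑ m : CVec X n, A k * (g m * Bern m θμ.1 - gmax * Bern m θμ.1) :=
                Finset.sum_congr rfl fun m _ => by ring
            _ = A k * ∑ m : CVec X n, (g m * Bern m θμ.1 - gmax * Bern m θμ.1) :=
                (Finset.mul_sum _ _ _).symm
            _ = A k * ((∑ m : CVec X n, g m * Bern m θμ.1)
                - ∑ m : CVec X n, gmax * Bern m θμ.1) := by
                rw [Finset.sum_sub_distrib]
            _ = _ := by rw [← Finset.mul_sum]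
        rw [this, sum_bern_simplex]
        unfold CoMnP CoMn
        ring
      have hpI : I ≤ CoMnP g θμ := csInf_le hbdd ⟨θμ, rfl⟩
      have hfinal : I - (A k - 1) * R ≤ gmax + A k * (CoMnP g θμ - gmax) := by
        have hAk1 := hA1 k
        have h1 : gmax + A k * (CoMnP g θμ - gmax)
            = CoMnP g θμ + (A k - 1) * (CoMnP g θμ - gmax) := by ring
        rw [h1]
        have h2 : gmin - gmax ≤ CoMnP g θμ - gmax := by
          have := hp_ge θμ; linarith
        have h3 : (A k - 1) * (gmin - gmax) ≤ (A k - 1) * (CoMnP g θμ - gmax) :=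
          mul_le_mul_of_nonneg_left h2 (by linarith)
        have h4 : (A k - 1) * (gmin - gmax) = -((A k - 1) * R) := by rw [hRdef]; ring
        linarith
      calc I - (A k - 1) * R ≤ gmax + A k * (CoMnP g θμ - gmax) := hfinal
        _ ≤ gmax + ∑ m : CVec X n, w m * (g m - gmax) := by
            rw [← hstep3]; exact add_le_add_right hstep2 _
        _ = hk μ := hstep1.symm
    -- from pointwise bound to Q
    have hQN : Q n g = Q (n + k) hk := lift_exact P Q hP htc hQ hn k g
    rw [hQN, hQ (n + k) hk]
    have hcoh := (hP (n + k) hN1).1.1 (fun z => hk (countMap (n + k) z))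
    refine le_trans ?_ hcoh
    refine le_csInf (Set.range_nonempty _) ?_
    rintro y ⟨z, rfl⟩
    exact hpoint (countMap (n + k) z)
  have htendsto : Filter.Tendsto (fun k : ℕ => I - (A k - 1) * R) Filter.atTop (nhds I) := by
    have t1 : Filter.Tendsto (fun k : ℕ => A k - 1) Filter.atTop (nhds 0) := by
      have h0 := (A_tendsto n).sub_const 1
      rw [sub_self] at h0
      exact h0
    have t2 : Filter.Tendsto (fun k : ℕ => (A k - 1) * R) Filter.atTop (nhds 0) := by
      have h0 := t1.mul_const R
      rw [zero_mul] at h0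
      exact h0
    have t3 := (tendsto_const_nhds (x := I) (f := Filter.atTop (α := ℕ))).sub t2
    rw [sub_zero] at t3
    exact t3
  exact le_of_tendsto' htendsto hbound

end MainLemmas
section WellDef
set_option linter.unusedSectionVars false
variable {X : Type*} [Fintype X] [DecidableEq X] [Nonempty X]

lemma lift_N (P : ∀ n : ℕ, ((Fin n → X) → ℝ) → ℝ)
    (Q : ∀ n : ℕ, (CVec X n → ℝ) → ℝ)
    (hP : ∀ n : ℕ, 1 ≤ n → LowerPrevCoherent (P n) ∧ Exchangeable (P n))
    (htc : PTimeConsistent P)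
    (hQ : ∀ (n : ℕ) (h : CVec X n → ℝ), Q n h = P n (fun z => h (countMap n z)))
    {n : ℕ} (hn : 1 ≤ n) (g : CVec X n → ℝ) {N : ℕ} (hnN : n ≤ N) :
    ∃ h : CVec X N → ℝ, Q n g = Q N h ∧ ∀ θ : SimplexPt X, CoMn h θ.1 = CoMn g θ.1 := by
  obtain ⟨k, rfl⟩ := Nat.exists_eq_add_of_le hnN
  exact ⟨_, lift_exact P Q hP htc hQ hn k g, poly_lift k g⟩

lemma CoMn_sub_sum {N : ℕ} (h₁ h₂ : CVec X N → ℝ) (θ : SimplexPt X) :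
    ∑ m : CVec X N, (h₁ m * (nu m : ℝ) - h₂ m * (nu m : ℝ)) * ∏ x, θ.1 x ^ m.1 x
      = CoMn h₁ θ.1 - CoMn h₂ θ.1 := by
  unfold CoMn Bern
  rw [← Finset.sum_sub_distrib]
  exact Finset.sum_congr rfl fun m _ => by ring

lemma welldef (P : ∀ n : ℕ, ((Fin n → X) → ℝ) → ℝ)
    (Q : ∀ n : ℕ, (CVec X n → ℝ) → ℝ)
    (hP : ∀ n : ℕ, 1 ≤ n → LowerPrevCoherent (P n) ∧ Exchangeable (P n))
    (htc : PTimeConsistent P)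
    (hQ : ∀ (n : ℕ) (h : CVec X n → ℝ), Q n h = P n (fun z => h (countMap n z)))
    {n₁ n₂ : ℕ} (h₁ : 1 ≤ n₁) (h₂ : 1 ≤ n₂) (g₁ : CVec X n₁ → ℝ) (g₂ : CVec X n₂ → ℝ)
    (heq : ∀ θ : SimplexPt X, CoMn g₁ θ.1 = CoMn g₂ θ.1) :
    Q n₁ g₁ = Q n₂ g₂ := by
  obtain ⟨h₁', e₁, p₁⟩ := lift_N P Q hP htc hQ h₁ g₁ (Nat.le_add_right n₁ n₂)
  obtain ⟨h₂', e₂, p₂⟩ := lift_N P Q hP htc hQ h₂ g₂ (Nat.le_add_left n₂ n₁)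
  have hind := monomial_indep (fun m : CVec X (n₁ + n₂) => h₁' m * (nu m : ℝ) - h₂' m * (nu m : ℝ))
    (fun θ => by rw [CoMn_sub_sum h₁' h₂' θ, p₁ θ, p₂ θ, heq θ, sub_self])
  have hfun : h₁' = h₂' := by
    funext m
    have h0 : h₁' m * (nu m : ℝ) - h₂' m * (nu m : ℝ) = 0 := hind m
    have hν := nu_ne_zero_real m
    have : (h₁' m - h₂' m) * (nu m : ℝ) = 0 := by linarith
    rcases mul_eq_zero.mp this with h' | h'
    · linarith
    · exact absurd h' hν
  rw [e₁, e₂, hfun]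

end WellDef
/-- Representation theorem for exchangeable sequences: a time consistent
family of coherent exchangeable lower previsions has a unique coherent representing lower
prevision `S` on the polynomial gambles on the simplex, with `P^n(f) = S(Mn^n(f|·))` and
`Q^n(g) = S(CoMn^n(g|·))`. -/
theorem stmt11 {X : Type*} [Fintype X] [DecidableEq X] [Nonempty X]
    (P : ∀ n : ℕ, ((Fin n → X) → ℝ) → ℝ)
    (hP : ∀ n : ℕ, 1 ≤ n → LowerPrevCoherent (P n) ∧ Exchangeable (P n))
    (htc : PTimeConsistent P)
    (Q : ∀ n : ℕ, (CVec X n → ℝ) → ℝ)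
    (hQ : ∀ (n : ℕ) (h : CVec X n → ℝ), Q n h = P n (fun z => h (countMap n z))) :
    ∃ S : (SimplexPt X → ℝ) → ℝ,
      (CoherentOnPoly S ∧
        ∀ n : ℕ, 1 ≤ n →
          (∀ f : (Fin n → X) → ℝ, P n f = S (MnP f)) ∧
          (∀ g : CVec X n → ℝ, Q n g = S (CoMnP g))) ∧
      ∀ S' : (SimplexPt X → ℝ) → ℝ,
        (CoherentOnPoly S' ∧
          ∀ n : ℕ, 1 ≤ n →
            (∀ f : (Fin n → X) → ℝ, P n f = S' (MnP f)) ∧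
            (∀ g : CVec X n → ℝ, Q n g = S' (CoMnP g))) →
        ∀ p : SimplexPt X → ℝ, IsPolyGamble p → S' p = S p := by
  classical
  set S : (SimplexPt X → ℝ) → ℝ := fun p =>
    if h : IsPolyGamble p then Q h.choose h.choose_spec.2.choose else 0 with hSdef
  -- representation lemma: S agrees with Q on any representation
  have hrep : ∀ (p : SimplexPt X → ℝ) (hp : IsPolyGamble p) (n : ℕ), 1 ≤ n →
      ∀ g : CVec X n → ℝ, p = (fun θ => CoMnP g θ) → S p = Q n g := by
    intro p hp n hn g hpg
    have hS : S p = Q hp.choose hp.choose_spec.2.choose := dif_pos hp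
    rw [hS]
    refine welldef P Q hP htc hQ hp.choose_spec.1 hn _ g ?_
    intro θ
    have e1 : p θ = CoMn hp.choose_spec.2.choose θ.1 :=
      congrFun hp.choose_spec.2.choose_spec θ
    have e2 : p θ = CoMn g θ.1 := congrFun hpg θ
    rw [← e1, e2]
  refine ⟨S, ⟨⟨?_, ?_, ?_⟩, ?_⟩, ?_⟩
  · -- lower bound
    rintro p ⟨n, hn, g, hpg⟩
    rw [hrep p ⟨n, hn, g, hpg⟩ n hn g hpg, hpg]
    exact Q_lower P Q hP htc hQ hn g
  · -- scaling
    rintro p ⟨n, hn, g, hpg⟩ l hl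
    have h2 : (fun θ => l * p θ) = fun θ => CoMnP (fun m => l * g m) θ := by
      funext θ
      rw [congrFun hpg θ]
      unfold CoMnP CoMn
      rw [Finset.mul_sum]
      exact Finset.sum_congr rfl fun m _ => by ring
    rw [hrep p ⟨n, hn, g, hpg⟩ n hn g hpg,
      hrep _ ⟨n, hn, _, h2⟩ n hn _ h2, hQ, hQ]
    exact (hP n hn).1.2.1 (fun z => g (countMap n z)) l hl
  · -- superadditivity
    rintro p q ⟨n₁, hn₁, g₁, hpg⟩ ⟨n₂, hn₂, g₂, hqg⟩
    obtain ⟨h₁', e₁, p₁⟩ := lift_N P Q hP htc hQ hn₁ g₁ (Nat.le_add_right n₁ n₂)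
    obtain ⟨h₂', e₂, p₂⟩ := lift_N P Q hP htc hQ hn₂ g₂ (Nat.le_add_left n₂ n₁)
    have hN : 1 ≤ n₁ + n₂ := le_trans hn₁ (Nat.le_add_right n₁ n₂)
    have hpN : p = fun θ => CoMnP h₁' θ := by
      funext θ; rw [congrFun hpg θ]; exact (p₁ θ).symm
    have hqN : q = fun θ => CoMnP h₂' θ := by
      funext θ; rw [congrFun hqg θ]; exact (p₂ θ).symm
    have hpqN : p + q = fun θ => CoMnP (h₁' + h₂') θ := by
      funext θ
      rw [Pi.add_apply, congrFun hpN θ, congrFun hqN θ]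
      unfold CoMnP CoMn
      rw [← Finset.sum_add_distrib]
      exact Finset.sum_congr rfl fun m _ => by rw [Pi.add_apply]; ring
    rw [hrep p ⟨n₁ + n₂, hN, h₁', hpN⟩ _ hN h₁' hpN,
      hrep q ⟨n₁ + n₂, hN, h₂', hqN⟩ _ hN h₂' hqN,
      hrep (p + q) ⟨n₁ + n₂, hN, h₁' + h₂', hpqN⟩ _ hN _ hpqN,
      hQ, hQ, hQ]
    have hfun : (fun z => (h₁' + h₂') (countMap (n₁ + n₂) z))
        = (fun z => h₁' (countMap (n₁ + n₂) z)) + (fun z => h₂' (countMap (n₁ + n₂) z)) := rfl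
    rw [hfun]
    exact (hP (n₁ + n₂) hN).1.2.2 _ _
  · -- the two representation properties
    intro n hn
    constructor
    · intro f
      have hMn : MnP f = fun θ => CoMnP (MuHy f) θ := by
        funext θ
        unfold MnP CoMnP
        exact (CoMn_MuHy f θ.1).symm
      rw [P_eq_Q_MuHy P Q hP hQ hn f,
        hrep (MnP f) ⟨n, hn, MuHy f, hMn⟩ n hn (MuHy f) hMn]
    · intro g
      exact (hrep (CoMnP g) ⟨n, hn, g, rfl⟩ n hn g rfl).symm
  · -- uniqueness
    rintro S' ⟨hS'coh, hS'props⟩ p ⟨n, hn, g, hpg⟩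
    have h1 : S' p = Q n g := by
      rw [hpg]
      exact ((hS'props n hn).2 g).symm
    rw [h1, hrep p ⟨n, hn, g, hpg⟩ n hn g hpg]
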